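/- Let S be a monoid and let d : S → ℕ satisfy d(1) = 0 and d(s·t) = d(s) + d(t) for all s, t ∈ S. Suppose S is the union of finitely many sandwiches a_i⟨w_i⟩b_i (i = 1, …, k) such that for each i either w_i = 1 or d(w_i) ≥ 1. Then there is a constant C such that for every n the set {s ∈ S : d(s) ≤ n} has at most C·(n+1) elements. -/
import Mathlib


/-- The sandwich `a⟨w⟩b = {a * w^n * b : n ∈ ℕ}` in a monoid. -/
def sandwich {S : Type*} [Monoid S] (a w b : S) : Set S :=
  Set.range fun n : ℕ => a * w ^ n * b

lemma ncard_iUnion_le_sum {α ι : Type*} [Fintype ι] (s : ι → Set α)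
    (h : ∀ i, (s i).Finite) : (⋃ i, s i).ncard ≤ ∑ i, (s i).ncard := by
  classical
  have he : (⋃ i, s i) = ↑(Finset.univ.biUnion fun i => (h i).toFinset) := by
    simp
  rw [he, Set.ncard_coe_finset]
  refine Finset.card_biUnion_le.trans (Finset.sum_le_sum fun i _ => ?_)
  rw [Set.ncard_eq_toFinset_card (s i) (h i)]

theorem finite_union_of_sandwiches_linear_growth
    {S : Type*} [Monoid S] (d : S → ℕ)
    (hd1 : d 1 = 0) (hdmul : ∀ s t : S, d (s * t) = d s + d t)
    (k : ℕ) (a w b : Fin k → S)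
    (hw : ∀ i, w i = 1 ∨ 1 ≤ d (w i))
    (hcover : (Set.univ : Set S) = ⋃ i, sandwich (a i) (w i) (b i)) :
    ∃ C : ℕ, ∀ n : ℕ, {s : S | d s ≤ n}.Finite ∧
      {s : S | d s ≤ n}.ncard ≤ C * (n + 1) := by
  have hpow : ∀ (x : S) (m : ℕ), d (x ^ m) = m * d x := by
    intro x m
    induction m with
    | zero => simpa using hd1
    | succ m ih => rw [pow_succ, hdmul, ih]; ring
  refine ⟨k, fun n => ?_⟩
  set T : Fin k → Set S := fun i => (fun m => a i * w i ^ m * b i) '' Set.Iic n with hT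
  have hsub : {s : S | d s ≤ n} ⊆ ⋃ i, T i := by
    intro s hs
    have : s ∈ (Set.univ : Set S) := trivial
    rw [hcover] at this
    obtain ⟨U, ⟨i, rfl⟩, hsU⟩ := this
    obtain ⟨m, rfl⟩ := hsU
    rcases hw i with h1 | h1
    · exact Set.mem_iUnion.2 ⟨i, ⟨0, Nat.zero_le n, by simp [h1]⟩⟩
    · have hm : m ≤ n := by
        have : m * d (w i) ≤ d (a i * w i ^ m * b i) := by
          rw [hdmul, hdmul, hpow]; omega
        have := le_trans this hs
        calc m = m * 1 := (mul_one m).symm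
          _ ≤ m * d (w i) := Nat.mul_le_mul_left m h1
          _ ≤ n := this
      exact Set.mem_iUnion.2 ⟨i, ⟨m, hm, rfl⟩⟩
  have hTfin : ∀ i, (T i).Finite := fun i =>
    (Set.finite_Iic n).image _
  have hfin : {s : S | d s ≤ n}.Finite :=
    ((Set.finite_iUnion hTfin).subset hsub)
  refine ⟨hfin, ?_⟩
  have hTcard : ∀ i, (T i).ncard ≤ n + 1 := by
    intro i
    calc (T i).ncard ≤ (Set.Iic n).ncard := Set.ncard_image_le (Set.finite_Iic n)
      _ = n + 1 := by
          rw [← Nat.card_coe_set_eq, Nat.card_eq_card_toFinset]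
          simp
  calc {s : S | d s ≤ n}.ncard ≤ (⋃ i, T i).ncard :=
        Set.ncard_le_ncard hsub (Set.finite_iUnion hTfin)
    _ ≤ ∑ i, (T i).ncard := ncard_iUnion_le_sum T hTfin
    _ ≤ ∑ _i : Fin k, (n + 1) := Finset.sum_le_sum fun i _ => hTcard i
    _ = k * (n + 1) := by simp [Finset.sum_const, Finset.card_fin]
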